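/- Orthogonal Procrustes: given B ∈ ℂ^{p×M} with p ≤ M and singular value decomposition B = P Ξ Q^H (P ∈ ℂ^{p×p}, Q ∈ ℂ^{M×M} unitary, Ξ diagonal with nonnegative entries), the matrix Γ = P Q_{(:,1:p)}^H minimizes ‖B − Γ‖_F² over all Γ ∈ ℂ^{p×M} with Γ Γ^H = I_p. -/

import Mathlib

open Matrix

/-- Squared Frobenius norm of a complex matrix. -/
noncomputable def frobSq {m n : Type*} [Fintype m] [Fintype n]
    (X : Matrix m n ℂ) : ℝ := (Matrix.trace (Xᴴ * X)).re

private lemma procr_diag_trace (p M : ℕ) (hp : p ≤ M) (Ξ Z : Matrix (Fin p) (Fin M) ℂ)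
    (hdiag : ∀ (i : Fin p) (j : Fin M), (i : ℕ) ≠ (j : ℕ) → Ξ i j = 0) :
    Matrix.trace (Ξᴴ * Z) =
      ∑ i : Fin p, star (Ξ i (Fin.castLE hp i)) * Z i (Fin.castLE hp i) := by
  rw [Matrix.trace]
  simp only [Matrix.diag_apply, Matrix.mul_apply, Matrix.conjTranspose_apply]
  rw [Finset.sum_comm]
  refine Finset.sum_congr rfl fun i _ => ?_
  refine Finset.sum_eq_single (Fin.castLE hp i) (fun j _ hj => ?_) (by simp)
  rw [hdiag i j (fun h => hj (Fin.ext h.symm)), star_zero, zero_mul]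

private lemma procr_entry_re_le (p M : ℕ) (Z : Matrix (Fin p) (Fin M) ℂ) (hZ : Z * Zᴴ = 1)
    (i : Fin p) (j : Fin M) : (Z i j).re ≤ 1 := by
  have h1 : ((Z * Zᴴ) i i).re = 1 := by rw [hZ]; simp
  have h2 : ∑ k : Fin M, Complex.normSq (Z i k) = 1 := by
    rw [← h1, Matrix.mul_apply]
    simp [Matrix.conjTranspose_apply, Complex.mul_conj, Complex.normSq]
  have h3 : Complex.normSq (Z i j) ≤ 1 := by
    rw [← h2]
    exact Finset.single_le_sum (fun k _ => Complex.normSq_nonneg _) (Finset.mem_univ j)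
  have h4 := Complex.re_le_norm (Z i j)
  have h5 : ‖Z i j‖ ^ 2 = Complex.normSq (Z i j) := Complex.sq_norm _
  nlinarith [norm_nonneg (Z i j)]

private lemma procr_expand (p M : ℕ) (B Γ : Matrix (Fin p) (Fin M) ℂ) (hΓ : Γ * Γᴴ = 1) :
    frobSq (B - Γ) = frobSq B + p - 2 * (Matrix.trace (Bᴴ * Γ)).re := by
  unfold frobSq
  have e1 : (B - Γ)ᴴ * (B - Γ) = Bᴴ * B - Bᴴ * Γ - Γᴴ * B + Γᴴ * Γ := by
    rw [conjTranspose_sub, Matrix.sub_mul, Matrix.mul_sub, Matrix.mul_sub]; abel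
  rw [e1, Matrix.trace_add, Matrix.trace_sub, Matrix.trace_sub]
  have e2 : Matrix.trace (Γᴴ * Γ) = Matrix.trace (Γ * Γᴴ) := Matrix.trace_mul_comm _ _
  have e3 : Matrix.trace (Γᴴ * B) = star (Matrix.trace (Bᴴ * Γ)) := by
    rw [← Matrix.trace_conjTranspose, Matrix.conjTranspose_mul, conjTranspose_conjTranspose]
  rw [e2, hΓ, e3]
  simp [Matrix.trace_one]
  ring

/-- Orthogonal Procrustes: if `B = P Ξ Qᴴ` is an SVD of `B ∈ ℂ^{p×M}` (`p ≤ M`,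
`P`, `Q` unitary, `Ξ` "diagonal" with nonnegative real entries), then
`Γ₀ = P (Q_{(:,1:p)})ᴴ` minimizes `‖B − Γ‖_F²` over all `Γ` with `Γ Γᴴ = I_p`. -/
theorem stmt11 (p M : ℕ) (hp : p ≤ M) (B : Matrix (Fin p) (Fin M) ℂ)
    (P : Matrix.unitaryGroup (Fin p) ℂ) (Q : Matrix.unitaryGroup (Fin M) ℂ)
    (Ξ : Matrix (Fin p) (Fin M) ℂ)
    (hdiag : ∀ (i : Fin p) (j : Fin M), (i : ℕ) ≠ (j : ℕ) → Ξ i j = 0)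
    (hpos : ∀ (i : Fin p) (j : Fin M), (i : ℕ) = (j : ℕ) → ∃ r : ℝ, 0 ≤ r ∧ Ξ i j = (r : ℂ))
    (hB : B = (P : Matrix (Fin p) (Fin p) ℂ) * Ξ * (Q : Matrix (Fin M) (Fin M) ℂ)ᴴ) :
    ∀ Γ : Matrix (Fin p) (Fin M) ℂ, Γ * Γᴴ = 1 →
      frobSq (B - (P : Matrix (Fin p) (Fin p) ℂ) *
          ((Q : Matrix (Fin M) (Fin M) ℂ).submatrix id (Fin.castLE hp))ᴴ)
        ≤ frobSq (B - Γ) := by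
  intro Γ hΓ
  set Pm := (P : Matrix (Fin p) (Fin p) ℂ) with hPm
  set Qm := (Q : Matrix (Fin M) (Fin M) ℂ) with hQm
  have hPs : Pmᴴ * Pm = 1 := by
    rw [← Matrix.star_eq_conjTranspose]; exact (Unitary.mem_iff.mp P.2).1
  have hPss : Pm * Pmᴴ = 1 := by
    rw [← Matrix.star_eq_conjTranspose]; exact (Unitary.mem_iff.mp P.2).2
  have hQs : Qmᴴ * Qm = 1 := by
    rw [← Matrix.star_eq_conjTranspose]; exact (Unitary.mem_iff.mp Q.2).1
  have hQss : Qm * Qmᴴ = 1 := by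
    rw [← Matrix.star_eq_conjTranspose]; exact (Unitary.mem_iff.mp Q.2).2
  set f : Fin p → Fin M := Fin.castLE hp with hf
  set Q1 : Matrix (Fin M) (Fin p) ℂ := Qm.submatrix id f with hQ1def
  set Γ₀ : Matrix (Fin p) (Fin M) ℂ := Pm * Q1ᴴ with hΓ₀def
  -- Q1ᴴ * Q1 = 1
  have hQ1 : Q1ᴴ * Q1 = 1 := by
    ext i j
    have : (Q1ᴴ * Q1) i j = (Qmᴴ * Qm) (f i) (f j) := by
      simp [Matrix.mul_apply, Matrix.conjTranspose_apply, hQ1def]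
    rw [this, hQs]
    simp [Matrix.one_apply, hf, Fin.castLE_inj]
  have hΓ₀ : Γ₀ * Γ₀ᴴ = 1 := by
    rw [hΓ₀def, Matrix.conjTranspose_mul, conjTranspose_conjTranspose]
    calc Pm * Q1ᴴ * (Q1 * Pmᴴ) = Pm * (Q1ᴴ * Q1) * Pmᴴ := by
          simp only [Matrix.mul_assoc]
      _ = 1 := by rw [hQ1, Matrix.mul_one, hPss]
  -- singular values
  choose r hr0 hrΞ using fun i => hpos i (f i) rfl
  have hstar : ∀ i, star (Ξ i (f i)) = ((r i : ℝ) : ℂ) := by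
    intro i; rw [hrΞ i]; exact Complex.conj_ofReal _
  -- trace formula for any Γ'
  have htr : ∀ Γ' : Matrix (Fin p) (Fin M) ℂ,
      Matrix.trace (Bᴴ * Γ') = ∑ i : Fin p,
        ((r i : ℝ) : ℂ) * (Pmᴴ * Γ' * Qm) i (f i) := by
    intro Γ'
    have e : Bᴴ * Γ' = Qm * (Ξᴴ * (Pmᴴ * Γ')) := by
      rw [hB, Matrix.conjTranspose_mul, Matrix.conjTranspose_mul,
        conjTranspose_conjTranspose]
      simp only [Matrix.mul_assoc]
    rw [e, Matrix.trace_mul_comm, Matrix.mul_assoc,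
      procr_diag_trace p M hp Ξ (Pmᴴ * Γ' * Qm) hdiag]
    exact Finset.sum_congr rfl fun i _ => by rw [hstar i]
  -- the minimizer's trace
  have hZ0 : Pmᴴ * Γ₀ * Qm = Q1ᴴ * Qm := by
    rw [hΓ₀def, ← Matrix.mul_assoc Pmᴴ Pm Q1ᴴ, hPs, Matrix.one_mul]
  have hZ0diag : ∀ i : Fin p, (Pmᴴ * Γ₀ * Qm) i (f i) = 1 := by
    intro i
    rw [hZ0]
    have : (Q1ᴴ * Qm) i (f i) = (Qmᴴ * Qm) (f i) (f i) := by
      simp [Matrix.mul_apply, Matrix.conjTranspose_apply, hQ1def]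
    rw [this, hQs]
    simp [Matrix.one_apply]
  have htr0 : (Matrix.trace (Bᴴ * Γ₀)).re = ∑ i : Fin p, r i := by
    rw [htr Γ₀]
    rw [Complex.re_sum]
    refine Finset.sum_congr rfl fun i _ => ?_
    rw [hZ0diag i]; simp
  -- general Γ trace bound
  have hZ1 : (Pmᴴ * Γ * Qm) * (Pmᴴ * Γ * Qm)ᴴ = 1 := by
    have e : (Pmᴴ * Γ * Qm) * (Pmᴴ * Γ * Qm)ᴴ
        = Pmᴴ * (Γ * (Qm * (Qmᴴ * (Γᴴ * Pm)))) := by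
      simp only [Matrix.conjTranspose_mul, conjTranspose_conjTranspose, Matrix.mul_assoc]
    rw [e, ← Matrix.mul_assoc Qm, hQss, Matrix.one_mul, ← Matrix.mul_assoc Γ, hΓ,
      Matrix.one_mul, hPs]
  have hbound : (Matrix.trace (Bᴴ * Γ)).re ≤ ∑ i : Fin p, r i := by
    rw [htr Γ, Complex.re_sum]
    refine Finset.sum_le_sum fun i _ => ?_
    have h1 : (((r i : ℝ) : ℂ) * (Pmᴴ * Γ * Qm) i (f i)).re
        = r i * ((Pmᴴ * Γ * Qm) i (f i)).re := by simp
    rw [h1]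
    have h2 := procr_entry_re_le p M (Pmᴴ * Γ * Qm) hZ1 i (f i)
    nlinarith [hr0 i]
  rw [procr_expand p M B Γ hΓ, procr_expand p M B Γ₀ hΓ₀, htr0]
  linarith
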